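/- arXiv:2006.06823 — 2 statements merged into one kernel-verified Lean document; each statement's English description precedes it below -/
import Mathlib

section
/- Let d ≥ 1, let v : ℝ × ℝ^d → ℝ^d be continuously differentiable, and let ψ : ℝ × ℝ^d → ℝ^d be twice continuously differentiable with ∂_t ψ(t,x) + D_x ψ(t,x)·v(t,x) = 0 for all (t,x). Define J(t,x) := det(D_x ψ(t,x)). Then J satisfies ∂_t J(t,x) + ⟨∇_x J(t,x), v(t,x)⟩ = −J(t,x)·div_x v(t,x) for all (t,x). Equivalently, U := 1 − J satisfies −∂_t U − ⟨v, ∇_x U⟩ = −div_x v + U·div_x v, which is the Jacobian transport equation used in PDE-constrained LDDMM based on the state equation. -/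
open scoped RealInnerProductSpace

/-- Divergence of a vector field on `ℝ^d`: the trace of its (Fréchet) Jacobian. -/
noncomputable def spatialDiv {d : ℕ}
    (w : EuclideanSpace ℝ (Fin d) → EuclideanSpace ℝ (Fin d))
    (x : EuclideanSpace ℝ (Fin d)) : ℝ :=
  LinearMap.trace ℝ (EuclideanSpace ℝ (Fin d)) (fderiv ℝ w x).toLinearMap

/-- The Jacobian determinant `J(t,x) = det(Dₓψ(t,x))` of a time-dependent map. -/
noncomputable def jacDet {d : ℕ}
    (ψ : ℝ × EuclideanSpace ℝ (Fin d) → EuclideanSpace ℝ (Fin d))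
    (t : ℝ) (x : EuclideanSpace ℝ (Fin d)) : ℝ :=
  LinearMap.det (fderiv ℝ (fun y => ψ (t, y)) x).toLinearMap

open scoped Matrix

lemma det_row_bound {d : ℕ} (m : Fin d → Fin d → ℝ) :
    ‖(Matrix.of m).det‖ ≤ (Fintype.card (Equiv.Perm (Fin d)) : ℝ) * ∏ i, ‖m i‖ := by
  rw [Matrix.det_apply']
  refine le_trans (norm_sum_le _ _) ?_
  have hterm : ∀ σ : Equiv.Perm (Fin d),
      ‖(((Equiv.Perm.sign σ : ℤ) : ℝ)) * ∏ i, Matrix.of m (σ i) i‖ ≤ ∏ i, ‖m i‖ := by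
    intro σ
    rw [norm_mul]
    have h1 : ‖((Equiv.Perm.sign σ : ℤ) : ℝ)‖ = 1 := by
      rcases Int.units_eq_one_or (Equiv.Perm.sign σ) with h | h <;> simp [h]
    rw [h1, one_mul, Real.norm_eq_abs, Finset.abs_prod]
    calc ∏ i, |Matrix.of m (σ i) i| ≤ ∏ i, ‖m (σ i)‖ := by
          refine Finset.prod_le_prod (fun i _ => abs_nonneg _) fun i _ => ?_
          exact norm_le_pi_norm (m (σ i)) i
      _ = ∏ i, ‖m i‖ := Equiv.prod_comp σ (fun j => ‖m j‖)
  refine le_trans (Finset.sum_le_sum fun σ _ => hterm σ) ?_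
  rw [Finset.sum_const, Finset.card_univ, nsmul_eq_mul]

/-- Determinant, as a continuous multilinear map in the rows. -/
noncomputable def detCM (d : ℕ) :
    ContinuousMultilinearMap ℝ (fun _ : Fin d => (Fin d → ℝ)) ℝ :=
  (Matrix.detRowAlternating :
      AlternatingMap ℝ (Fin d → ℝ) ℝ (Fin d)).toMultilinearMap.mkContinuous
    (Fintype.card (Equiv.Perm (Fin d))) (fun m => det_row_bound m)

lemma detCM_apply {d : ℕ} (m : Fin d → Fin d → ℝ) : detCM d m = (Matrix.of m).det := rfl

lemma detCM_linearDeriv {d : ℕ} (M N : Matrix (Fin d) (Fin d) ℝ) :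
    (detCM d).linearDeriv (fun i j => M j i) (fun i j => -(M * N) j i)
      = -(M.det * N.trace) := by
  classical
  rw [ContinuousMultilinearMap.linearDeriv_apply]
  have h : ∀ i : Fin d,
      (detCM d) (Function.update (fun i j => M j i) i (fun j => -(M * N) j i))
        = -(N i i) * M.det := by
    intro i
    have h1 : (fun j => -(M * N) j i) = ∑ k, (fun k' => -(N k' i)) k • (Mᵀ k) := by
      funext j
      simp only [Finset.sum_apply, Pi.smul_apply, smul_eq_mul, Matrix.transpose_apply,
        Matrix.mul_apply, neg_mul]
      rw [← Finset.sum_neg_distrib]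
      exact Finset.sum_congr rfl fun k _ => by ring
    have h2 : (detCM d) (Function.update (fun i j => M j i) i (fun j => -(M * N) j i))
        = (Mᵀ.updateRow i (∑ k, (fun k' => -(N k' i)) k • (Mᵀ k))).det := by
      rw [← h1]; rfl
    rw [h2, Matrix.det_updateRow_sum, Matrix.det_transpose]
    simp
  rw [Finset.sum_congr rfl fun i _ => h i]
  have h4 : ∑ i : Fin d, -(N i i) * M.det = -((∑ i : Fin d, N i i) * M.det) := by
    rw [Finset.sum_mul, ← Finset.sum_neg_distrib]
    exact Finset.sum_congr rfl fun i _ => by ring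
  rw [h4, mul_comm]
  rfl

lemma hasFDerivAt_slice {d : ℕ} {F : Type*} [NormedAddCommGroup F] [NormedSpace ℝ F]
    {f : ℝ × EuclideanSpace ℝ (Fin d) → F} {D : ℝ × EuclideanSpace ℝ (Fin d) →L[ℝ] F}
    {t : ℝ} {x : EuclideanSpace ℝ (Fin d)}
    (hf : HasFDerivAt f D (t, x)) :
    HasFDerivAt (fun y => f (t, y))
      (D.comp (ContinuousLinearMap.inr ℝ ℝ (EuclideanSpace ℝ (Fin d)))) x := by
  have h : HasFDerivAt (fun y : EuclideanSpace ℝ (Fin d) => ((t, y) : ℝ × EuclideanSpace ℝ (Fin d)))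
      (ContinuousLinearMap.inr ℝ ℝ (EuclideanSpace ℝ (Fin d))) x :=
    HasFDerivAt.prodMk (hasFDerivAt_const t x) (hasFDerivAt_id x)
  exact hf.comp x h

lemma hasDerivAt_slice {d : ℕ} {F : Type*} [NormedAddCommGroup F] [NormedSpace ℝ F]
    {f : ℝ × EuclideanSpace ℝ (Fin d) → F} {D : ℝ × EuclideanSpace ℝ (Fin d) →L[ℝ] F}
    {t : ℝ} {x : EuclideanSpace ℝ (Fin d)}
    (hf : HasFDerivAt f D (t, x)) :
    HasDerivAt (fun s => f (s, x)) (D (1, 0)) t := by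
  have h : HasDerivAt (fun s : ℝ => ((s, x) : ℝ × EuclideanSpace ℝ (Fin d))) (1, 0) t :=
    HasDerivAt.prodMk (hasDerivAt_id t) (hasDerivAt_const t x)
  exact hf.comp_hasDerivAt t h

lemma key {d : ℕ}
    (v : ℝ × EuclideanSpace ℝ (Fin d) → EuclideanSpace ℝ (Fin d)) (hv : ContDiff ℝ 1 v)
    (ψ : ℝ × EuclideanSpace ℝ (Fin d) → EuclideanSpace ℝ (Fin d)) (hψ : ContDiff ℝ 2 ψ)
    (hdef : ∀ (t : ℝ) (x : EuclideanSpace ℝ (Fin d)),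
      deriv (fun s => ψ (s, x)) t + fderiv ℝ (fun y => ψ (t, y)) x (v (t, x)) = 0)
    (t : ℝ) (x : EuclideanSpace ℝ (Fin d)) :
    ∃ D : ℝ × EuclideanSpace ℝ (Fin d) →L[ℝ] ℝ,
      HasFDerivAt (fun p : ℝ × EuclideanSpace ℝ (Fin d) => jacDet ψ p.1 p.2) D (t, x) ∧
      D (1, v (t, x)) = -(jacDet ψ t x * spatialDiv (fun y => v (t, y)) x) := by
  classical
  have hψ1 : Differentiable ℝ ψ := hψ.differentiable two_ne_zero
  have hv1 : Differentiable ℝ v := hv.differentiable one_ne_zero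
  have hL : ContDiff ℝ 1 (fderiv ℝ ψ) := hψ.fderiv_right (by norm_num)
  have hLd : Differentiable ℝ (fderiv ℝ ψ) := hL.differentiable one_ne_zero
  -- identification of spatial partial derivatives
  have hA : ∀ p : ℝ × EuclideanSpace ℝ (Fin d),
      fderiv ℝ (fun y => ψ (p.1, y)) p.2
        = (fderiv ℝ ψ p).comp (ContinuousLinearMap.inr ℝ ℝ (EuclideanSpace ℝ (Fin d))) := by
    intro p
    exact (hasFDerivAt_slice (hψ1 p).hasFDerivAt).fderiv
  have hB : fderiv ℝ (fun y => v (t, y)) x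
      = (fderiv ℝ v (t, x)).comp (ContinuousLinearMap.inr ℝ ℝ (EuclideanSpace ℝ (Fin d))) :=
    (hasFDerivAt_slice (hv1 (t, x)).hasFDerivAt).fderiv
  -- the state equation, reformulated
  have hzero : ∀ p : ℝ × EuclideanSpace ℝ (Fin d), fderiv ℝ ψ p (1, v p) = 0 := by
    intro p
    have h1 := hdef p.1 p.2
    rw [hA p, (hasDerivAt_slice (hψ1 p).hasFDerivAt).deriv] at h1
    have h2 : ((1 : ℝ), v p) = ((1 : ℝ), (0 : EuclideanSpace ℝ (Fin d))) + ((0 : ℝ), v p) := by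
      simp
    rw [h2, map_add]
    simpa using h1
  -- mixed second derivative identity
  have hc' : HasFDerivAt (fun p : ℝ × EuclideanSpace ℝ (Fin d) => ((1 : ℝ), v p))
      ((0 : (ℝ × EuclideanSpace ℝ (Fin d)) →L[ℝ] ℝ).prod (fderiv ℝ v (t, x))) (t, x) :=
    HasFDerivAt.prodMk (hasFDerivAt_const (1 : ℝ) (t, x)) (hv1 (t, x)).hasFDerivAt
  have happ : HasFDerivAt (fun p : ℝ × EuclideanSpace ℝ (Fin d) => fderiv ℝ ψ p (1, v p))
      ((fderiv ℝ ψ (t, x)).comp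
          ((0 : (ℝ × EuclideanSpace ℝ (Fin d)) →L[ℝ] ℝ).prod (fderiv ℝ v (t, x)))
        + (fderiv ℝ (fderiv ℝ ψ) (t, x)).flip (1, v (t, x))) (t, x) :=
    (hLd (t, x)).hasFDerivAt.clm_apply hc'
  have h0 : (fun p : ℝ × EuclideanSpace ℝ (Fin d) => fderiv ℝ ψ p (1, v p))
      = fun _ => 0 := funext hzero
  rw [h0] at happ
  have hDzero := happ.unique (hasFDerivAt_const 0 (t, x))
  have hsymm := second_derivative_symmetric (f := ψ) (fun y => (hψ1 y).hasFDerivAt)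
    ((hLd (t, x)).hasFDerivAt)
  have hmix : ∀ y : EuclideanSpace ℝ (Fin d),
      fderiv ℝ (fderiv ℝ ψ) (t, x) (1, v (t, x)) (0, y)
        = -(fderiv ℝ ψ (t, x)) (0, fderiv ℝ v (t, x) (0, y)) := by
    intro y
    have h1 := congrArg (fun (D : (ℝ × EuclideanSpace ℝ (Fin d)) →L[ℝ]
        EuclideanSpace ℝ (Fin d)) => D ((0 : ℝ), y)) hDzero
    simp only [ContinuousLinearMap.add_apply, ContinuousLinearMap.comp_apply,
      ContinuousLinearMap.prod_apply, ContinuousLinearMap.zero_apply,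
      ContinuousLinearMap.flip_apply] at h1
    rw [hsymm (1, v (t, x)) ((0 : ℝ), y)]
    exact eq_neg_of_add_eq_zero_right h1
  -- coordinates
  set b : Module.Basis (Fin d) ℝ (EuclideanSpace ℝ (Fin d)) := PiLp.basisFun 2 ℝ (Fin d) with hb
  set κ : EuclideanSpace ℝ (Fin d) →L[ℝ] (Fin d → ℝ) :=
    (PiLp.continuousLinearEquiv 2 ℝ (fun _ : Fin d => ℝ) :
      EuclideanSpace ℝ (Fin d) →L[ℝ] (Fin d → ℝ)) with hκ
  set g : ℝ × EuclideanSpace ℝ (Fin d) → (Fin d → Fin d → ℝ) :=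
    fun p i => κ (fderiv ℝ ψ p ((0 : ℝ), b i)) with hg
  set φ' : Fin d → ((ℝ × EuclideanSpace ℝ (Fin d)) →L[ℝ] (Fin d → ℝ)) := fun i =>
    κ.comp ((fderiv ℝ ψ (t, x)).comp
        (0 : (ℝ × EuclideanSpace ℝ (Fin d)) →L[ℝ] (ℝ × EuclideanSpace ℝ (Fin d)))
      + (fderiv ℝ (fderiv ℝ ψ) (t, x)).flip ((0 : ℝ), b i)) with hφ'
  have hgd : HasFDerivAt g (ContinuousLinearMap.pi φ') (t, x) := by
    refine hasFDerivAt_pi.mpr fun i => ?_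
    exact κ.hasFDerivAt.comp (t, x)
      ((hLd (t, x)).hasFDerivAt.clm_apply (hasFDerivAt_const ((0 : ℝ), b i) (t, x)))
  have hFd : HasFDerivAt (fun p => detCM d (g p))
      (((detCM d).linearDeriv (g (t, x))).comp (ContinuousLinearMap.pi φ')) (t, x) :=
    ((detCM d).hasFDerivAt (x := g (t, x))).comp (t, x) hgd
  -- identification of the Jacobian determinant
  have hofg : ∀ p : ℝ × EuclideanSpace ℝ (Fin d),
      Matrix.of (g p) = (LinearMap.toMatrix b b
        ((fderiv ℝ ψ p).comp
          (ContinuousLinearMap.inr ℝ ℝ (EuclideanSpace ℝ (Fin d)))).toLinearMap)ᵀ := by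
    intro p
    ext i j
    rw [Matrix.transpose_apply, LinearMap.toMatrix_apply, hb, PiLp.basisFun_repr]
    rfl
  have hjac : ∀ p : ℝ × EuclideanSpace ℝ (Fin d), jacDet ψ p.1 p.2 = detCM d (g p) := by
    intro p
    rw [jacDet, hA p, ← LinearMap.det_toMatrix b, detCM_apply, hofg p, Matrix.det_transpose]
  set M : Matrix (Fin d) (Fin d) ℝ := LinearMap.toMatrix b b
    ((fderiv ℝ ψ (t, x)).comp
      (ContinuousLinearMap.inr ℝ ℝ (EuclideanSpace ℝ (Fin d)))).toLinearMap with hM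
  set N : Matrix (Fin d) (Fin d) ℝ := LinearMap.toMatrix b b
    ((fderiv ℝ v (t, x)).comp
      (ContinuousLinearMap.inr ℝ ℝ (EuclideanSpace ℝ (Fin d)))).toLinearMap with hN
  have hgM : g (t, x) = fun i j => M j i := by
    funext i j
    exact congrFun (congrFun (hofg (t, x)) i) j
  have hg'w : (ContinuousLinearMap.pi φ') (1, v (t, x)) = fun i j => -(M * N) j i := by
    funext i j
    have hMN : M * N = LinearMap.toMatrix b b
        ((((fderiv ℝ ψ (t, x)).comp
            (ContinuousLinearMap.inr ℝ ℝ (EuclideanSpace ℝ (Fin d)))).toLinearMap).comp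
          (((fderiv ℝ v (t, x)).comp
            (ContinuousLinearMap.inr ℝ ℝ (EuclideanSpace ℝ (Fin d)))).toLinearMap)) :=
      (LinearMap.toMatrix_comp b b b _ _).symm
    rw [ContinuousLinearMap.pi_apply, hφ']
    simp only [ContinuousLinearMap.comp_apply, ContinuousLinearMap.add_apply,
      ContinuousLinearMap.zero_apply, ContinuousLinearMap.flip_apply, map_zero, zero_add]
    rw [hmix (b i), hMN, LinearMap.toMatrix_apply, hb, PiLp.basisFun_repr]
    rfl
  refine ⟨((detCM d).linearDeriv (g (t, x))).comp (ContinuousLinearMap.pi φ'), ?_, ?_⟩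
  · have heq : (fun p : ℝ × EuclideanSpace ℝ (Fin d) => jacDet ψ p.1 p.2)
        = fun p => detCM d (g p) := funext fun p => hjac p
    rw [heq]
    exact hFd
  · have hJM : jacDet ψ t x = M.det := by
      have := hjac (t, x)
      rw [detCM_apply, hofg (t, x), Matrix.det_transpose] at this
      exact this
    have hdiv : spatialDiv (fun y => v (t, y)) x = N.trace := by
      rw [spatialDiv, hB]
      exact LinearMap.trace_eq_matrix_trace ℝ b _
    rw [ContinuousLinearMap.comp_apply, hg'w, hJM, hdiv]
    have := detCM_linearDeriv M N
    rw [hgM]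
    exact this

/-- if `v` is `C¹`, `ψ` is `C²` and satisfies the deformation state equation
`∂ₜ ψ + Dₓψ · v = 0`, then `J(t,x) = det(Dₓψ(t,x))` satisfies
`∂ₜ J + ⟨∇ₓ J, v⟩ = -J · div_x v`; equivalently `U = 1 - J` satisfies
`-∂ₜ U - ⟨v, ∇ₓ U⟩ = -div_x v + U · div_x v`. -/
theorem stmt5 {d : ℕ} (hd : 1 ≤ d)
    (v : ℝ × EuclideanSpace ℝ (Fin d) → EuclideanSpace ℝ (Fin d))
    (hv : ContDiff ℝ 1 v)
    (ψ : ℝ × EuclideanSpace ℝ (Fin d) → EuclideanSpace ℝ (Fin d))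
    (hψ : ContDiff ℝ 2 ψ)
    (hdef : ∀ (t : ℝ) (x : EuclideanSpace ℝ (Fin d)),
      deriv (fun s => ψ (s, x)) t + fderiv ℝ (fun y => ψ (t, y)) x (v (t, x)) = 0) :
    (∀ (t : ℝ) (x : EuclideanSpace ℝ (Fin d)),
        deriv (fun s => jacDet ψ s x) t
          + ⟪gradient (fun y => jacDet ψ t y) x, v (t, x)⟫
          = - jacDet ψ t x * spatialDiv (fun y => v (t, y)) x)
    ∧ (∀ (t : ℝ) (x : EuclideanSpace ℝ (Fin d)),
        - deriv (fun s => 1 - jacDet ψ s x) t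
          - ⟪v (t, x), gradient (fun y => 1 - jacDet ψ t y) x⟫
          = - spatialDiv (fun y => v (t, y)) x
            + (1 - jacDet ψ t x) * spatialDiv (fun y => v (t, y)) x) := by
  have main : ∀ (t : ℝ) (x : EuclideanSpace ℝ (Fin d)),
      ∃ D : ℝ × EuclideanSpace ℝ (Fin d) →L[ℝ] ℝ,
        HasDerivAt (fun s => jacDet ψ s x) (D (1, 0)) t ∧
        HasFDerivAt (fun y => jacDet ψ t y)
          (D.comp (ContinuousLinearMap.inr ℝ ℝ (EuclideanSpace ℝ (Fin d)))) x ∧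
        D (1, 0) + D (0, v (t, x))
          = -(jacDet ψ t x * spatialDiv (fun y => v (t, y)) x) := by
    intro t x
    obtain ⟨D, hD, hval⟩ := key v hv ψ hψ hdef t x
    refine ⟨D, hasDerivAt_slice hD, hasFDerivAt_slice hD, ?_⟩
    have hpair : ((1 : ℝ), (0 : EuclideanSpace ℝ (Fin d))) + ((0 : ℝ), v (t, x))
        = (1, v (t, x)) := by simp
    rw [← map_add, hpair, hval]
  constructor
  · intro t x
    obtain ⟨D, hder, hgr, hsum⟩ := main t x
    have hgrad : gradient (fun y => jacDet ψ t y) x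
        = (InnerProductSpace.toDual ℝ (EuclideanSpace ℝ (Fin d))).symm
            (D.comp (ContinuousLinearMap.inr ℝ ℝ (EuclideanSpace ℝ (Fin d)))) :=
      hgr.hasGradientAt.gradient
    rw [hder.deriv, hgrad, InnerProductSpace.toDual_symm_apply]
    have : (D.comp (ContinuousLinearMap.inr ℝ ℝ (EuclideanSpace ℝ (Fin d)))) (v (t, x))
        = D (0, v (t, x)) := rfl
    rw [this, hsum]
    ring
  · intro t x
    obtain ⟨D, hder, hgr, hsum⟩ := main t x
    have hder' : deriv (fun s => 1 - jacDet ψ s x) t = -(D (1, 0)) :=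
      (hder.const_sub 1).deriv
    have hgrad : gradient (fun y => 1 - jacDet ψ t y) x
        = (InnerProductSpace.toDual ℝ (EuclideanSpace ℝ (Fin d))).symm
            (-(D.comp (ContinuousLinearMap.inr ℝ ℝ (EuclideanSpace ℝ (Fin d))))) :=
      (hgr.const_sub 1).hasGradientAt.gradient
    rw [hder', hgrad, real_inner_comm, InnerProductSpace.toDual_symm_apply]
    have : (-(D.comp (ContinuousLinearMap.inr ℝ ℝ (EuclideanSpace ℝ (Fin d))))) (v (t, x))
        = -(D (0, v (t, x))) := rfl
    rw [this]
    linear_combination hsum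
end

section
/- Let d ≥ 1, let v : ℝ × ℝ^d → ℝ^d be continuously differentiable, and let ψ : ℝ × ℝ^d → ℝ^d be twice continuously differentiable with ∂_t ψ(t,x) + D_x ψ(t,x)·v(t,x) = 0 for all (t,x) and ψ(1,x) = x for all x. Given a continuously differentiable λ₁ : ℝ^d → ℝ, define λ(t,x) := det(D_x ψ(t,x)) · λ₁(ψ(t,x)). Then λ satisfies the adjoint (continuity) equation ∂_t λ(t,x) + div_x( λ(t,x)·v(t,x) ) = 0 for all (t,x), with terminal condition λ(1,·) = λ₁. (This is the representation λ(t) = J(t)·λ(1)∘ψ(t) of the adjoint variable used in PDE-constrained LDDMM based on the state equation.) -/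
open Matrix Finset

namespace Stmt6Aux

variable {d : ℕ}

lemma sum_det_updateColumn_mul (A B : Matrix (Fin d) (Fin d) ℝ) :
    ∑ i : Fin d, (A.updateCol i (fun r => (A * B) r i)).det = B.trace * A.det := by
  have h : ∀ i : Fin d, (A.updateCol i (fun r => (A * B) r i)).det = B i i * A.det := by
    intro i
    have hcol : (fun r => (A * B) r i) = ∑ k : Fin d, B k i • (fun r => A r k) := by
      funext r
      simp [Matrix.mul_apply, Finset.sum_apply, mul_comm]
    rw [← Matrix.cramer_apply, hcol, map_sum, Finset.sum_apply]
    have h2 : ∀ k : Fin d, (Matrix.cramer A (B k i • fun r => A r k)) i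
        = B k i * (A.updateCol i (fun r => A r k)).det := by
      intro k
      rw [LinearMap.map_smul, Pi.smul_apply, Matrix.cramer_apply, smul_eq_mul]
    rw [Finset.sum_congr rfl fun k _ => h2 k]
    have h3 : ∀ k : Fin d, k ≠ i → (A.updateCol i (fun r => A r k)).det = 0 := by
      intro k hk
      apply Matrix.det_zero_of_column_eq (Ne.symm hk)
      intro r
      rw [Matrix.updateCol_self, Matrix.updateCol_apply, if_neg hk]
    rw [Finset.sum_eq_single i]
    · rw [Matrix.updateCol_eq_self]
    · intro k _ hk; rw [h3 k hk, mul_zero]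
    · intro h; exact absurd (Finset.mem_univ i) h
  rw [Finset.sum_congr rfl (fun i _ => h i), ← Finset.sum_mul, Matrix.trace]
  rfl

lemma leibniz_eval (A : Matrix (Fin d) (Fin d) ℝ) (c : Fin d → Fin d → ℝ) :
    ∑ σ : Equiv.Perm (Fin d), (Equiv.Perm.sign σ : ℤ) •
        ∑ i : Fin d, (∏ k ∈ univ.erase i, A (σ k) k) * c (σ i) i
      = ∑ i : Fin d, (A.updateCol i (fun r => c r i)).det := by
  have h : ∀ i : Fin d, (A.updateCol i (fun r => c r i)).det
      = ∑ σ : Equiv.Perm (Fin d), (Equiv.Perm.sign σ : ℤ) •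
          ((∏ k ∈ univ.erase i, A (σ k) k) * c (σ i) i) := by
    intro i
    rw [Matrix.det_apply]
    refine Finset.sum_congr rfl fun σ _ => ?_
    congr 1
    rw [← Finset.mul_prod_erase univ _ (Finset.mem_univ i)]
    rw [Matrix.updateCol_self, mul_comm]
    congr 1
    refine Finset.prod_congr rfl fun k hk => ?_
    rw [Matrix.updateCol_apply, if_neg (Finset.mem_erase.mp hk).1]
  rw [Finset.sum_congr rfl fun i (_ : i ∈ univ) => h i, Finset.sum_comm]
  refine Finset.sum_congr rfl fun σ _ => ?_
  rw [Finset.smul_sum]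

variable {F : Type*} [NormedAddCommGroup F] [NormedSpace ℝ F]

lemma hasFDerivAt_detish (g : Fin d → Fin d → F → ℝ) (g' : Fin d → Fin d → (F →L[ℝ] ℝ)) (p : F)
    (hg : ∀ i j, HasFDerivAt (g i j) (g' i j) p) :
    HasFDerivAt (fun q => (Matrix.of (fun i j => g i j q)).det)
      (∑ σ : Equiv.Perm (Fin d), (Equiv.Perm.sign σ : ℤ) •
        ∑ i : Fin d, (∏ k ∈ univ.erase i, g (σ k) k p) • g' (σ i) i) p := by
  have h1 : ∀ σ : Equiv.Perm (Fin d),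
      HasFDerivAt (fun q => (Equiv.Perm.sign σ : ℤ) • ∏ i : Fin d, g (σ i) i q)
        ((Equiv.Perm.sign σ : ℤ) • ∑ i : Fin d, (∏ k ∈ univ.erase i, g (σ k) k p) • g' (σ i) i)
        p := by
    intro σ
    exact (HasFDerivAt.finset_prod (fun i _ => hg (σ i) i)).const_smul (Equiv.Perm.sign σ : ℤ)
  have h2 := HasFDerivAt.sum (fun σ (_ : σ ∈ univ) => h1 σ)
  convert h2 using 1 <;> try rfl
  funext q
  rw [Matrix.det_apply, Finset.sum_apply]
  rfl

noncomputable def ee (i : Fin d) : EuclideanSpace ℝ (Fin d) := EuclideanSpace.single i 1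

lemma toMatrix_clm (f : EuclideanSpace ℝ (Fin d) →L[ℝ] EuclideanSpace ℝ (Fin d)) :
    LinearMap.toMatrix (EuclideanSpace.basisFun (Fin d) ℝ).toBasis
      (EuclideanSpace.basisFun (Fin d) ℝ).toBasis f.toLinearMap
      = Matrix.of (fun i j => (f (ee j)) i) := by
  ext i j
  rw [LinearMap.toMatrix_apply]
  simp [ee, EuclideanSpace.basisFun_apply]

lemma det_clm (f : EuclideanSpace ℝ (Fin d) →L[ℝ] EuclideanSpace ℝ (Fin d)) :
    LinearMap.det f.toLinearMap = (Matrix.of (fun i j => (f (ee j)) i)).det := by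
  rw [← LinearMap.det_toMatrix (EuclideanSpace.basisFun (Fin d) ℝ).toBasis, toMatrix_clm]

lemma trace_clm (f : EuclideanSpace ℝ (Fin d) →L[ℝ] EuclideanSpace ℝ (Fin d)) :
    LinearMap.trace ℝ (EuclideanSpace ℝ (Fin d)) f.toLinearMap = ∑ i : Fin d, (f (ee i)) i := by
  rw [LinearMap.trace_eq_matrix_trace ℝ (EuclideanSpace.basisFun (Fin d) ℝ).toBasis,
    toMatrix_clm, Matrix.trace]
  rfl

lemma sum_repr (u : EuclideanSpace ℝ (Fin d)) : ∑ i : Fin d, u i • ee i = u := by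
  have := (EuclideanSpace.basisFun (Fin d) ℝ).sum_repr u
  simpa [ee, EuclideanSpace.basisFun_apply, EuclideanSpace.basisFun_repr] using this

lemma trace_smulRight (f : EuclideanSpace ℝ (Fin d) →L[ℝ] ℝ) (u : EuclideanSpace ℝ (Fin d)) :
    LinearMap.trace ℝ (EuclideanSpace ℝ (Fin d)) ((f.smulRight u).toLinearMap) = f u := by
  rw [trace_clm]
  have : ∀ i : Fin d, ((f.smulRight u) (ee i)) i = f (ee i) * u i := by
    intro i; simp [ContinuousLinearMap.smulRight_apply]
  rw [Finset.sum_congr rfl fun i _ => this i]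
  conv_rhs => rw [← sum_repr u]
  rw [map_sum]
  exact Finset.sum_congr rfl fun i _ =>
    by rw [ContinuousLinearMap.map_smul]; simp [mul_comm]

end Stmt6Aux

abbrev EE (d : ℕ) := EuclideanSpace ℝ (Fin d)

set_option maxHeartbeats 2000000 in
open Stmt6Aux in
/-- if `v` is `C¹`, `ψ` is `C²`, satisfies the deformation state equation
`∂ₜ ψ + Dₓψ · v = 0` and `ψ(1,·) = id`, then for any `C¹` terminal datum `λ₁`, the function
`λ(t,x) = det(Dₓψ(t,x)) · λ₁(ψ(t,x))` satisfies the adjoint (continuity) equation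
`∂ₜ λ + div_x(λ v) = 0` with `λ(1,·) = λ₁`. -/
theorem stmt6 {d : ℕ} (hd : 1 ≤ d)
    (v : ℝ × EuclideanSpace ℝ (Fin d) → EuclideanSpace ℝ (Fin d))
    (hv : ContDiff ℝ 1 v)
    (ψ : ℝ × EuclideanSpace ℝ (Fin d) → EuclideanSpace ℝ (Fin d))
    (hψ : ContDiff ℝ 2 ψ)
    (hdef : ∀ (t : ℝ) (x : EuclideanSpace ℝ (Fin d)),
      deriv (fun s => ψ (s, x)) t + fderiv ℝ (fun y => ψ (t, y)) x (v (t, x)) = 0)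
    (hψ1 : ∀ x, ψ (1, x) = x)
    (lam1 : EuclideanSpace ℝ (Fin d) → ℝ) (hlam1 : ContDiff ℝ 1 lam1) :
    (∀ (t : ℝ) (x : EuclideanSpace ℝ (Fin d)),
        deriv (fun s => jacDet ψ s x * lam1 (ψ (s, x))) t
          + spatialDiv (fun y => (jacDet ψ t y * lam1 (ψ (t, y))) • v (t, y)) x = 0)
    ∧ (∀ x, jacDet ψ 1 x * lam1 (ψ (1, x)) = lam1 x) := by
  classical
  -- terminal condition
  have hterm : ∀ x, jacDet ψ 1 x * lam1 (ψ (1, x)) = lam1 x := by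
    intro x
    have h1 : (fun y => ψ ((1:ℝ), y)) = fun y => y := funext hψ1
    rw [jacDet, h1, fderiv_id', hψ1]
    simp
  refine ⟨?_, hterm⟩
  intro t x
  set p : ℝ × EE d := (t, x) with hp
  -- basic differentiability
  have hψd : Differentiable ℝ ψ := hψ.differentiable (by norm_num)
  have hvd : Differentiable ℝ v := hv.differentiable (by norm_num)
  have hGc : ContDiff ℝ 1 (fderiv ℝ ψ) := hψ.fderiv_right (by norm_num)
  have hGd : Differentiable ℝ (fderiv ℝ ψ) := hGc.differentiable (by norm_num)
  -- the embedding y ↦ (t, y)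
  set Cx : EE d →L[ℝ] ℝ × EE d := (0 : EE d →L[ℝ] ℝ).prod (ContinuousLinearMap.id ℝ (EE d)) with hCxdef
  have hCx : ∀ y : EE d, Cx y = ((0:ℝ), y) := fun y => rfl
  have hcurve : ∀ (s : ℝ) (z : EE d),
      HasFDerivAt (fun y => ψ (s, y)) ((fderiv ℝ ψ (s, z)).comp Cx) z := by
    intro s z
    have h1 : HasFDerivAt (fun y : EE d => ((s:ℝ), y)) Cx z :=
      HasFDerivAt.prodMk (hasFDerivAt_const s z) (hasFDerivAt_id z)
    exact (hψd (s, z)).hasFDerivAt.comp z h1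
  have hfx : ∀ (s : ℝ) (z : EE d),
      fderiv ℝ (fun y => ψ (s, y)) z = (fderiv ℝ ψ (s, z)).comp Cx :=
    fun s z => (hcurve s z).fderiv
  -- matrix-entry functions of the spatial Jacobian
  set g : Fin d → Fin d → (ℝ × EE d) → ℝ :=
    fun i j q => (fderiv ℝ ψ q (((0:ℝ), ee j) : ℝ × EE d)) i with hgdef
  set Jf : (ℝ × EE d) → ℝ := fun q => (Matrix.of (fun i j => g i j q)).det with hJfdef
  have hJeq : ∀ (s : ℝ) (z : EE d), jacDet ψ s z = Jf (s, z) := by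
    intro s z
    rw [jacDet, hfx s z, det_clm]
    rfl
  -- second derivative
  set H : (ℝ × EE d) →L[ℝ] (ℝ × EE d) →L[ℝ] EE d := fderiv ℝ (fderiv ℝ ψ) p with hHdef
  have hH : HasFDerivAt (fderiv ℝ ψ) H p := (hGd p).hasFDerivAt
  have hsym : ∀ a b : ℝ × EE d, H a b = H b a :=
    second_derivative_symmetric (fun y => (hψd y).hasFDerivAt) hH
  -- entrywise derivatives of g
  set g' : Fin d → Fin d → ((ℝ × EE d) →L[ℝ] ℝ) := fun i j =>
    (((EuclideanSpace.proj i : EE d →L[ℝ] ℝ).comp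
       (ContinuousLinearMap.apply ℝ (EE d) (((0:ℝ), ee j) : ℝ × EE d))).comp H) with hg'def
  have hg : ∀ i j, HasFDerivAt (g i j) (g' i j) p := by
    intro i j
    exact (((EuclideanSpace.proj i : EE d →L[ℝ] ℝ).comp
      (ContinuousLinearMap.apply ℝ (EE d) (((0:ℝ), ee j) : ℝ × EE d))).hasFDerivAt).comp p hH
  -- state equation in fderiv form
  set Vf : (ℝ × EE d) → ℝ × EE d := fun q => ((1:ℝ), v q) with hVfdef
  have hstate : ∀ q : ℝ × EE d, fderiv ℝ ψ q (Vf q) = 0 := by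
    rintro ⟨s, z⟩
    have hc : HasDerivAt (fun s' => ψ (s', z)) (fderiv ℝ ψ (s, z) ((1:ℝ), (0: EE d))) s :=
      (hψd (s, z)).hasFDerivAt.comp_hasDerivAt s
        (HasDerivAt.prodMk (hasDerivAt_id s) (hasDerivAt_const s z))
    have h := hdef s z
    rw [hc.deriv, hfx s z] at h
    have hsplit : (((1:ℝ), v (s, z)) : ℝ × EE d) = ((1:ℝ), (0: EE d)) + ((0:ℝ), v (s, z)) := by
      simp
    calc fderiv ℝ ψ (s, z) (Vf (s, z))
        = fderiv ℝ ψ (s, z) (((1:ℝ), (0: EE d)) + ((0:ℝ), v (s, z))) := by rw [← hsplit]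
      _ = fderiv ℝ ψ (s, z) ((1:ℝ), (0: EE d)) + fderiv ℝ ψ (s, z) ((0:ℝ), v (s, z)) := map_add _ _ _
      _ = 0 := h
  -- differentiate the state equation
  set DV : (ℝ × EE d) →L[ℝ] ℝ × EE d := (0 : (ℝ × EE d) →L[ℝ] ℝ).prod (fderiv ℝ v p) with hDVdef
  have hVd : HasFDerivAt Vf DV p := HasFDerivAt.prodMk (hasFDerivAt_const (1:ℝ) p) (hvd p).hasFDerivAt
  have hKd : HasFDerivAt (fun q => fderiv ℝ ψ q (Vf q))
      ((fderiv ℝ ψ p).comp DV + H.flip (Vf p)) p := hH.clm_apply hVd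
  have hK0 : HasFDerivAt (fun q => fderiv ℝ ψ q (Vf q)) (0 : (ℝ × EE d) →L[ℝ] EE d) p := by
    have hfun : (fun q => fderiv ℝ ψ q (Vf q)) = fun _ => (0: EE d) := funext hstate
    rw [hfun]
    exact hasFDerivAt_const 0 p
  have hstar : ∀ u : ℝ × EE d, H u (Vf p) = - (fderiv ℝ ψ p ((0:ℝ), fderiv ℝ v p u)) := by
    intro u
    have h0 : ((fderiv ℝ ψ p).comp DV + H.flip (Vf p)) u = (0 : (ℝ × EE d) →L[ℝ] EE d) u := by
      rw [hKd.unique hK0]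
    simp only [ContinuousLinearMap.add_apply, ContinuousLinearMap.comp_apply,
      ContinuousLinearMap.flip_apply, ContinuousLinearMap.zero_apply] at h0
    have hDVu : DV u = ((0:ℝ), fderiv ℝ v p u) := rfl
    rw [hDVu] at h0
    exact eq_neg_of_add_eq_zero_right h0
  -- matrices A (spatial Jacobian of ψ) and B (spatial Jacobian of v) at p
  set A : Matrix (Fin d) (Fin d) ℝ := Matrix.of (fun i j => g i j p) with hAdef
  set B : Matrix (Fin d) (Fin d) ℝ :=
    Matrix.of (fun k j => (fderiv ℝ v p (((0:ℝ), ee j) : ℝ × EE d)) k) with hBdef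
  have hg'V : ∀ i j, g' i j (Vf p) = -((A * B) i j) := by
    intro i j
    have h1 : g' i j (Vf p) = (H (Vf p)) (((0:ℝ), ee j) : ℝ × EE d) i := rfl
    have h2 : ∀ w : EE d, fderiv ℝ ψ p (((0:ℝ), w) : ℝ × EE d) i = ∑ k, w k * g i k p := by
      intro w
      have hT : fderiv ℝ ψ p (((0:ℝ), w) : ℝ × EE d) i
          = ((EuclideanSpace.proj i).comp ((fderiv ℝ ψ p).comp Cx)) w := rfl
      rw [hT]
      conv_lhs => rw [← sum_repr w]
      rw [map_sum]
      exact Finset.sum_congr rfl fun k _ => by rw [ContinuousLinearMap.map_smul]; rfl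
    rw [h1, hsym (Vf p) (((0:ℝ), ee j) : ℝ × EE d), hstar (((0:ℝ), ee j) : ℝ × EE d)]
    have h3 : (-(fderiv ℝ ψ p (((0:ℝ), fderiv ℝ v p (((0:ℝ), ee j) : ℝ × EE d)) : ℝ × EE d))) i
        = -(fderiv ℝ ψ p (((0:ℝ), fderiv ℝ v p (((0:ℝ), ee j) : ℝ × EE d)) : ℝ × EE d) i) := rfl
    rw [h3, h2]
    congr 1
    rw [Matrix.mul_apply]
    exact Finset.sum_congr rfl fun k _ => mul_comm _ _
  -- derivative of the Jacobian determinant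
  set DJ : (ℝ × EE d) →L[ℝ] ℝ := ∑ σ : Equiv.Perm (Fin d), (Equiv.Perm.sign σ : ℤ) •
      ∑ i : Fin d, (∏ k ∈ univ.erase i, g (σ k) k p) • g' (σ i) i with hDJdef
  have hJd : HasFDerivAt Jf DJ p := hasFDerivAt_detish g g' p hg
  have hDJV : DJ (Vf p) = -(B.trace * A.det) := by
    have h1 : DJ (Vf p) = ∑ σ : Equiv.Perm (Fin d), (Equiv.Perm.sign σ : ℤ) •
        ∑ i : Fin d, (∏ k ∈ univ.erase i, A (σ k) k) * (g' (σ i) i (Vf p)) := by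
      rw [hDJdef, ContinuousLinearMap.sum_apply]
      refine Finset.sum_congr rfl fun σ _ => ?_
      rw [ContinuousLinearMap.smul_apply, ContinuousLinearMap.sum_apply]
      rfl
    rw [h1, leibniz_eval A (fun r i => g' r i (Vf p))]
    have h2 : ∀ i : Fin d, (A.updateCol i (fun r => g' r i (Vf p))).det
        = - (A.updateCol i (fun r => (A * B) r i)).det := by
      intro i
      have hcol : (fun r => g' r i (Vf p)) = ((-1 : ℝ) • fun r => (A * B) r i) := by
        funext r; rw [hg'V r i]; simp
      rw [hcol, Matrix.det_updateCol_smul, neg_one_mul]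
    rw [Finset.sum_congr rfl fun i _ => h2 i, Finset.sum_neg_distrib,
      sum_det_updateColumn_mul]
  -- the composed terminal datum
  have hlam1d : Differentiable ℝ lam1 := hlam1.differentiable (by norm_num)
  set dl : EE d →L[ℝ] ℝ := fderiv ℝ lam1 (ψ p) with hdldef
  have hlψ : HasFDerivAt (fun q => lam1 (ψ q)) (dl.comp (fderiv ℝ ψ p)) p :=
    (hlam1d (ψ p)).hasFDerivAt.comp p (hψd p).hasFDerivAt
  set DL : (ℝ × EE d) →L[ℝ] ℝ := Jf p • (dl.comp (fderiv ℝ ψ p)) + lam1 (ψ p) • DJ with hDLdef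
  have hLam : HasFDerivAt (fun q => Jf q * lam1 (ψ q)) DL p := hJd.mul hlψ
  -- time-derivative term
  have hcurve2 : HasDerivAt (fun s : ℝ => ((s : ℝ), x) : ℝ → ℝ × EE d) (((1:ℝ), (0:EE d))) t :=
    HasDerivAt.prodMk (hasDerivAt_id t) (hasDerivAt_const t x)
  have hd1 : HasDerivAt (fun s => Jf (s, x) * lam1 (ψ (s, x))) (DL (((1:ℝ), (0:EE d)))) t :=
    by
      have h := HasFDerivAt.comp_hasDerivAt t
        (hLam : HasFDerivAt (fun q => Jf q * lam1 (ψ q)) DL ((fun s : ℝ => ((s : ℝ), x)) t)) hcurve2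
      exact h
  have hterm1 : deriv (fun s => jacDet ψ s x * lam1 (ψ (s, x))) t = DL (((1:ℝ), (0:EE d))) := by
    have hfun : (fun s => jacDet ψ s x * lam1 (ψ (s, x)))
        = fun s => Jf (s, x) * lam1 (ψ (s, x)) := funext fun s => by rw [hJeq s x]
    rw [hfun, hd1.deriv]
  -- divergence term
  have hCxF : HasFDerivAt (fun y : EE d => ((t : ℝ), y)) Cx x :=
    HasFDerivAt.prodMk (hasFDerivAt_const t x) (hasFDerivAt_id x)
  have hLx : HasFDerivAt (fun y : EE d => Jf (t, y) * lam1 (ψ (t, y))) (DL.comp Cx) x :=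
    hLam.comp x hCxF
  have hvx : HasFDerivAt (fun y : EE d => v (t, y)) ((fderiv ℝ v p).comp Cx) x :=
    (hvd p).hasFDerivAt.comp x hCxF
  have hW : HasFDerivAt (fun y : EE d => (Jf (t, y) * lam1 (ψ (t, y))) • v (t, y))
      ((Jf p * lam1 (ψ p)) • ((fderiv ℝ v p).comp Cx) + (DL.comp Cx).smulRight (v p)) x :=
    hLx.smul hvx
  have hterm2 : spatialDiv (fun y => (jacDet ψ t y * lam1 (ψ (t, y))) • v (t, y)) x
      = (Jf p * lam1 (ψ p)) * B.trace + DL (((0:ℝ), v p) : ℝ × EE d) := by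
    have hfun : (fun y => (jacDet ψ t y * lam1 (ψ (t, y))) • v (t, y))
        = fun y : EE d => (Jf (t, y) * lam1 (ψ (t, y))) • v (t, y) :=
      funext fun y => by rw [hJeq t y]
    rw [spatialDiv, hfun, hW.fderiv]
    rw [ContinuousLinearMap.coe_add, map_add, ContinuousLinearMap.coe_smul, LinearMap.map_smul,
      smul_eq_mul, trace_smulRight]
    have htr1 : LinearMap.trace ℝ (EE d) (((fderiv ℝ v p).comp Cx).toLinearMap) = B.trace := by
      rw [trace_clm, Matrix.trace]
      exact Finset.sum_congr rfl fun i _ => rfl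
    rw [htr1]
    rfl
  -- assemble
  rw [hterm1, hterm2]
  have hVp : ((((1:ℝ), (0:EE d)) : ℝ × EE d) + (((0:ℝ), v p) : ℝ × EE d)) = Vf p := by
    rw [Prod.mk_add_mk, add_zero, zero_add]
  have hsum : DL (((1:ℝ), (0:EE d)) : ℝ × EE d) + DL (((0:ℝ), v p) : ℝ × EE d) = DL (Vf p) := by
    rw [← map_add, hVp]
  have hDLV : DL (Vf p) = lam1 (ψ p) * (-(B.trace * A.det)) := by
    rw [hDLdef, ContinuousLinearMap.add_apply, ContinuousLinearMap.smul_apply,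
      ContinuousLinearMap.smul_apply, ContinuousLinearMap.comp_apply, hstate p, map_zero,
      smul_zero, zero_add, hDJV, smul_eq_mul]
  have hA : A.det = Jf p := rfl
  have hkey : DL (((1:ℝ), (0:EE d)) : ℝ × EE d) + DL (((0:ℝ), v p) : ℝ × EE d)
      = lam1 (ψ p) * (-(B.trace * Jf p)) := by rw [hsum, hDLV, hA]
  linear_combination hkey
end
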